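/- Krieger's Marker Lemma: Let Γ be a countable group acting by homeomorphisms on a totally disconnected compact metric space X, let P ⊂ Γ be a finite symmetric set not containing the identity, and let V ⊆ X be a clopen set such that g·x ≠ x for every g ∈ P and x ∈ V. Then there is a clopen set C ⊆ V with C ∩ g(C) = ∅ for all g ∈ P, and V ⊆ C ∪ ⋃_{g∈P} g(C). -/

import Mathlib

section Aux

variable {Γ X : Type*} [Group Γ] [MulAction Γ X]

/-- Greedy marker construction. -/
def kriegerGreedy (P : Finset Γ) : List (Set X) → Set X
  | [] => ∅
  | U :: L => kriegerGreedy P L ∪ (U \ ⋃ g ∈ P, (g • ·) '' kriegerGreedy P L)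

lemma krieger_image_eq (g : Γ) (C : Set X) :
    (g • ·) '' C = (fun x : X => g⁻¹ • x) ⁻¹' C := by
  ext x
  simp only [Set.mem_image, Set.mem_preimage]
  constructor
  · rintro ⟨y, hy, rfl⟩; simpa using hy
  · intro hx; exact ⟨g⁻¹ • x, hx, by simp⟩

lemma krieger_mem_image {g : Γ} {C : Set X} {x : X} :
    x ∈ (g • ·) '' C ↔ g⁻¹ • x ∈ C := by
  rw [krieger_image_eq]; rfl

lemma kriegerGreedy_subset (P : Finset Γ) (V : Set X) :
    ∀ L : List (Set X), (∀ U ∈ L, U ⊆ V) → kriegerGreedy P L ⊆ V := by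
  intro L
  induction L with
  | nil => intro _; simp [kriegerGreedy]
  | cons U L ih =>
    intro h
    simp only [kriegerGreedy]
    apply Set.union_subset (ih fun U hU => h U (List.mem_cons_of_mem _ hU))
    exact (Set.diff_subset).trans (h U (List.mem_cons_self))

lemma kriegerGreedy_clopen [TopologicalSpace X]
    (hcont : ∀ g : Γ, Continuous fun x : X => g • x) (P : Finset Γ) :
    ∀ L : List (Set X), (∀ U ∈ L, IsClopen U) → IsClopen (kriegerGreedy P L) := by
  intro L
  induction L with
  | nil => intro _; simpa [kriegerGreedy] using isClopen_empty
  | cons U L ih =>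
    intro h
    have hD : IsClopen (kriegerGreedy P L) := ih fun U hU => h U (List.mem_cons_of_mem _ hU)
    have himg : ∀ g : Γ, IsClopen ((g • ·) '' kriegerGreedy P L) := fun g => by
      rw [krieger_image_eq]; exact hD.preimage (hcont g⁻¹)
    have hUn : IsClopen (⋃ g ∈ P, (g • ·) '' kriegerGreedy P L) :=
      isClopen_biUnion_finset fun g _ => himg g
    exact hD.union ((h U (List.mem_cons_self)).diff hUn)

lemma kriegerGreedy_disj (P : Finset Γ) (hPsym : ∀ g ∈ P, g⁻¹ ∈ P) :
    ∀ L : List (Set X), (∀ U ∈ L, ∀ g ∈ P, U ∩ (g • ·) '' U = ∅) →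
      ∀ g ∈ P, kriegerGreedy P L ∩ (g • ·) '' kriegerGreedy P L = ∅ := by
  intro L
  induction L with
  | nil => intro _ g _; simp [kriegerGreedy]
  | cons U L ih =>
    intro h g hg
    have hD := ih (fun U hU => h U (List.mem_cons_of_mem _ hU))
    set D := kriegerGreedy P L with hDdef
    set C' := U \ ⋃ g ∈ P, (g • ·) '' D with hC'def
    rw [Set.eq_empty_iff_forall_notMem]
    rintro x ⟨hx1, hx2⟩
    rw [krieger_mem_image] at hx2
    have hC'D : ∀ y, y ∈ C' → ∀ k ∈ P, k⁻¹ • y ∉ D := by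
      rintro y ⟨_, hy2⟩ k hk hyD
      exact hy2 (Set.mem_biUnion hk (krieger_mem_image.mpr (by simpa using hyD)))
    simp only [kriegerGreedy, ← hDdef, ← hC'def, Set.mem_union] at hx1 hx2
    rcases hx1 with hx1 | hx1 <;> rcases hx2 with hx2 | hx2
    · exact Set.eq_empty_iff_forall_notMem.mp (hD g hg) x ⟨hx1, krieger_mem_image.mpr hx2⟩
    · -- x ∈ D, g⁻¹ • x ∈ C' : apply hC'D with k = g⁻¹
      have := hC'D _ hx2 g⁻¹ (hPsym g hg)
      simp only [inv_inv] at this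
      exact this (by simpa using hx1)
    · exact hC'D x hx1 g hg hx2
    · -- both in C' ⊆ U : U ∩ g • U = ∅
      refine Set.eq_empty_iff_forall_notMem.mp
        (h U (List.mem_cons_self) g hg) x ⟨hx1.1, krieger_mem_image.mpr hx2.1⟩

lemma kriegerGreedy_cover (P : Finset Γ) :
    ∀ L : List (Set X), ∀ U ∈ L,
      U ⊆ kriegerGreedy P L ∪ ⋃ g ∈ P, (g • ·) '' kriegerGreedy P L := by
  intro L
  induction L with
  | nil => simp
  | cons W L ih =>
    intro U hU x hx
    have hmonoD : kriegerGreedy P L ⊆ kriegerGreedy P (W :: L) := by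
      simp [kriegerGreedy]
    have hmono : kriegerGreedy P L ∪ (⋃ g ∈ P, (g • ·) '' kriegerGreedy P L) ⊆
        kriegerGreedy P (W :: L) ∪ ⋃ g ∈ P, (g • ·) '' kriegerGreedy P (W :: L) := by
      apply Set.union_subset_union hmonoD
      exact Set.iUnion₂_mono fun g _ => Set.image_mono hmonoD
    rcases List.mem_cons.mp hU with rfl | hU
    · by_cases hx' : x ∈ ⋃ g ∈ P, (g • ·) '' kriegerGreedy P L
      · exact hmono (Or.inr hx')
      · exact Or.inl (Or.inr ⟨hx, hx'⟩)
    · exact hmono (ih U hU hx)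

end Aux

/-- Krieger's Marker Lemma for actions of countable groups on totally disconnected
compact metric spaces. -/
theorem stmt7 {Γ X : Type*} [Group Γ] [Countable Γ] [MetricSpace X] [CompactSpace X]
    [TotallyDisconnectedSpace X] [MulAction Γ X]
    (hcont : ∀ g : Γ, Continuous fun x : X => g • x)
    (P : Finset Γ) (hP1 : (1 : Γ) ∉ P) (hPsym : ∀ g ∈ P, g⁻¹ ∈ P)
    (V : Set X) (hV : IsClopen V) (hfree : ∀ g ∈ P, ∀ x ∈ V, g • x ≠ x) :
    ∃ C : Set X, C ⊆ V ∧ IsClopen C ∧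
      (∀ g ∈ P, C ∩ ((g • ·) '' C) = ∅) ∧
      V ⊆ C ∪ ⋃ g ∈ P, (g • ·) '' C := by
  have : TotallySeparatedSpace X := loc_compact_t2_tot_disc_iff_tot_sep.mp ‹_›
  -- for each x ∈ V, a good clopen neighborhood
  have key : ∀ x ∈ V, ∃ U : Set X, x ∈ U ∧ IsClopen U ∧ U ⊆ V ∧
      ∀ g ∈ P, U ∩ (g • ·) '' U = ∅ := by
    intro x hx
    have hW : ∀ g, g ∈ P → ∃ W : Set X, IsClopen W ∧ x ∈ W ∧ g • x ∉ W := by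
      intro g hg
      obtain ⟨W, hWc, hxW, hgW⟩ := exists_isClopen_of_totally_separated
        (Ne.symm (hfree g hg x hx))
      exact ⟨W, hWc, hxW, hgW⟩
    choose! W hWc hxW hgW using hW
    refine ⟨V ∩ ⋂ g ∈ P, (W g ∩ (fun y => g • y) ⁻¹' (W g)ᶜ), ?_, ?_, Set.inter_subset_left, ?_⟩
    · refine ⟨hx, ?_⟩
      simp only [Set.mem_iInter, Set.mem_inter_iff, Set.mem_preimage, Set.mem_compl_iff]
      exact fun g hg => ⟨hxW g hg, hgW g hg⟩
    · refine hV.inter (isClopen_biInter_finset fun g hg => ?_)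
      exact (hWc g hg).inter ((hWc g hg).compl.preimage (hcont g))
    · intro g hg
      rw [Set.eq_empty_iff_forall_notMem]
      rintro y ⟨hy1, hy2⟩
      rw [krieger_mem_image] at hy2
      have h1 : y ∈ W g := by
        have := hy1.2
        simp only [Set.mem_iInter] at this
        exact (this g hg).1
      have h2 : g • (g⁻¹ • y) ∈ (W g)ᶜ := by
        have := hy2.2
        simp only [Set.mem_iInter, Set.mem_inter_iff, Set.mem_preimage] at this
        exact (this g hg).2
      simp only [smul_inv_smul, Set.mem_compl_iff] at h2
      exact h2 h1
  choose! U hxU hUc hUV hUdisj using key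
  -- compactness: finite subcover indexed by the subtype ↥V
  have hVcomp : IsCompact V := hV.isClosed.isCompact
  obtain ⟨t, ht⟩ := hVcomp.elim_finite_subcover (fun x : V => U x)
    (fun x => (hUc x x.2).2)
    (fun x hx => Set.mem_iUnion.mpr ⟨⟨x, hx⟩, hxU x hx⟩)
  set L : List (Set X) := t.toList.map (fun x : V => U x) with hL
  have hLmem : ∀ W ∈ L, ∃ x : V, W = U x := by
    intro W hW
    simp only [hL, List.mem_map] at hW
    obtain ⟨x, _, rfl⟩ := hW
    exact ⟨x, rfl⟩
  refine ⟨kriegerGreedy P L, ?_, ?_, ?_, ?_⟩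
  · exact kriegerGreedy_subset P V L fun W hW => by
      obtain ⟨x, rfl⟩ := hLmem W hW; exact hUV x x.2
  · exact kriegerGreedy_clopen hcont P L fun W hW => by
      obtain ⟨x, rfl⟩ := hLmem W hW; exact hUc x x.2
  · exact kriegerGreedy_disj P hPsym L fun W hW => by
      obtain ⟨x, rfl⟩ := hLmem W hW; exact hUdisj x x.2
  · intro x hx
    obtain ⟨_, ⟨y, rfl⟩, hxy⟩ := ht hx
    simp only [Set.mem_iUnion, exists_prop] at hxy
    obtain ⟨hyt, hxy⟩ := hxy
    have hmemL : U (y : X) ∈ L := by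
      simp only [hL, List.mem_map]
      exact ⟨y, Finset.mem_toList.mpr hyt, rfl⟩
    exact kriegerGreedy_cover P L _ hmemL hxy
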